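/- For a clause c (viewed as a set of literals) and a nonnegative integer α, the α-interior of c equals the disjunction over all subsets S of c with |S| = α+1 of the conjunction of literals in S; equivalently, it equals the conjunction over all subsets S of c with |S| = |c| − α of the disjunction of literals in S. (Here the α-interior of a theory Σ is the theory whose models are exactly those v such that every model within Hamming distance α of v is a model of Σ.) -/

import Mathlib

/-- Hamming distance between two 0/1 vectors. -/
def Hdist {n : ℕ} (v w : Fin n → Bool) : ℕ :=
  (Finset.univ.filter (fun i => v i ≠ w i)).card

/-- α-sigmaInt of a model set. -/
def sigmaInt {n : ℕ} (α : ℕ) (M : Set (Fin n → Bool)) : Set (Fin n → Bool) :=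
  {v | ∀ w, Hdist v w ≤ α → w ∈ M}

/-- α-sigmaExt of a model set. -/
def sigmaExt {n : ℕ} (α : ℕ) (M : Set (Fin n → Bool)) : Set (Fin n → Bool) :=
  {v | ∃ w ∈ M, Hdist v w ≤ α}

/-- A clause with positive index set `P` and negative index set `N`. -/
structure Clause (n : ℕ) where
  P : Finset (Fin n)
  N : Finset (Fin n)
  disj : Disjoint P N

/-- Satisfaction of a clause by an assignment. -/
def Clause.sat {n : ℕ} (c : Clause n) (v : Fin n → Bool) : Prop :=
  (∃ i ∈ c.P, v i = true) ∨ (∃ i ∈ c.N, v i = false)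

/-- Literals of a clause as pairs (index, required value). -/
def Clause.lits {n : ℕ} (c : Clause n) : Finset (Fin n × Bool) :=
  c.P.image (fun i => (i, true)) ∪ c.N.image (fun i => (i, false))

lemma mem_lits {n : ℕ} (c : Clause n) (p : Fin n × Bool) :
    p ∈ c.lits ↔ (p.1 ∈ c.P ∧ p.2 = true) ∨ (p.1 ∈ c.N ∧ p.2 = false) := by
  obtain ⟨i, b⟩ := p
  simp [Clause.lits, Prod.ext_iff]

lemma lits_inj {n : ℕ} (c : Clause n) {p q : Fin n × Bool}
    (hp : p ∈ c.lits) (hq : q ∈ c.lits) (h : p.1 = q.1) : p = q := by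
  rw [mem_lits] at hp hq
  have hd := Finset.disjoint_left.mp c.disj
  rcases hp with ⟨hp1, hp2⟩ | ⟨hp1, hp2⟩ <;> rcases hq with ⟨hq1, hq2⟩ | ⟨hq1, hq2⟩ <;>
    [skip; exact absurd (h ▸ hq1) (fun hh => hd hp1 hh);
     exact absurd hq1 (fun hh => hd (h ▸ hh) hp1); skip] <;>
    exact Prod.ext h (hp2.trans hq2.symm)

/-- Key characterization: v is in the α-interior iff at least α+1 literals are satisfied. -/
lemma key {n : ℕ} (α : ℕ) (c : Clause n) (v : Fin n → Bool) :
    v ∈ sigmaInt α {v | c.sat v} ↔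
      α + 1 ≤ (c.lits.filter (fun p => v p.1 = p.2)).card := by
  set T := c.lits.filter (fun p => v p.1 = p.2) with hTdef
  constructor
  · intro hv
    by_contra h
    push_neg at h
    have hTα : T.card ≤ α := Nat.lt_succ_iff.mp h
    set w : Fin n → Bool := fun i => if (i, v i) ∈ c.lits then !(v i) else v i with hwdef
    have hfilter : (Finset.univ.filter (fun i => v i ≠ w i)) = T.image Prod.fst := by
      ext i
      simp only [Finset.mem_filter, Finset.mem_univ, true_and, Finset.mem_image]
      constructor
      · intro hi
        refine ⟨(i, v i), ?_, rfl⟩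
        rw [hTdef, Finset.mem_filter]
        refine ⟨?_, rfl⟩
        by_contra hmem
        simp only [hwdef, hmem, if_false] at hi
        exact hi rfl
      · rintro ⟨⟨j, b⟩, hmem, rfl⟩
        rw [hTdef, Finset.mem_filter] at hmem
        have hvj : v j = b := hmem.2
        have : (j, v j) ∈ c.lits := by rw [hvj]; exact hmem.1
        simp only [hwdef, this, if_true]
        simp
    have hdist : Hdist v w ≤ α := by
      unfold Hdist
      rw [hfilter]
      exact le_trans (Finset.card_image_le) hTα
    have hsat : c.sat w := hv w hdist
    have hnot : ∀ i b, (i, b) ∈ c.lits → w i ≠ b := by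
      intro i b hib
      by_cases hvi : v i = b
      · simp only [hwdef]
        rw [hvi, if_pos hib]
        simp
      · have hnmem : (i, v i) ∉ c.lits := by
          intro hmem
          exact hvi (congrArg Prod.snd (lits_inj c hmem hib rfl))
        simp only [hwdef, hnmem, if_false]
        exact hvi
    rcases hsat with ⟨i, hiP, hwi⟩ | ⟨i, hiN, hwi⟩
    · exact hnot i true ((mem_lits c (i, true)).mpr (Or.inl ⟨hiP, rfl⟩)) hwi
    · exact hnot i false ((mem_lits c (i, false)).mpr (Or.inr ⟨hiN, rfl⟩)) hwi
  · intro hT w hw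
    have hTsub : T ⊆ c.lits := Finset.filter_subset _ _
    have hcard : (T.image Prod.fst).card = T.card :=
      Finset.card_image_of_injOn (fun p hp q hq hpq =>
        lits_inj c (hTsub hp) (hTsub hq) hpq)
    have hD : (Finset.univ.filter (fun i => v i ≠ w i)).card ≤ α := hw
    have hnsub : ¬ (T.image Prod.fst ⊆ Finset.univ.filter (fun i => v i ≠ w i)) := by
      intro hsub
      have := Finset.card_le_card hsub
      omega
    obtain ⟨i, hi, hni⟩ := Finset.not_subset.mp hnsub
    obtain ⟨⟨j, b⟩, hjb, rfl⟩ := Finset.mem_image.mp hi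
    simp only [Finset.mem_filter, Finset.mem_univ, true_and, not_not] at hni
    rw [hTdef, Finset.mem_filter] at hjb
    have hwj : w j = b := by rw [← hni]; exact hjb.2
    have := (mem_lits c (j, b)).mp hjb.1
    rcases this with ⟨hP, hb⟩ | ⟨hN, hb⟩
    · exact Or.inl ⟨j, hP, by rw [hwj]; exact hb⟩
    · exact Or.inr ⟨j, hN, by rw [hwj]; exact hb⟩

theorem stmt0 {n : ℕ} (α : ℕ) (c : Clause n) :
    sigmaInt α {v | c.sat v}
      = {v | ∃ S ⊆ c.lits, S.card = α + 1 ∧ ∀ p ∈ S, v p.1 = p.2} ∧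
    sigmaInt α {v | c.sat v}
      = {v | ∀ S ⊆ c.lits, S.card = c.lits.card - α → ∃ p ∈ S, v p.1 = p.2} := by
  constructor
  · ext v
    rw [key]
    set T := c.lits.filter (fun p => v p.1 = p.2) with hTdef
    constructor
    · intro hT
      obtain ⟨S, hS, hScard⟩ := Finset.exists_subset_card_eq hT
      refine ⟨S, hS.trans (Finset.filter_subset _ _), hScard, fun p hp => ?_⟩
      exact (Finset.mem_filter.mp (hS hp)).2
    · rintro ⟨S, hS, hScard, hsat⟩
      have : S ⊆ T := fun p hp => Finset.mem_filter.mpr ⟨hS hp, hsat p hp⟩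
      calc α + 1 = S.card := hScard.symm
        _ ≤ T.card := Finset.card_le_card this
  · ext v
    rw [key]
    set T := c.lits.filter (fun p => v p.1 = p.2) with hTdef
    have hTsub : T ⊆ c.lits := Finset.filter_subset _ _
    have hTle : T.card ≤ c.lits.card := Finset.card_le_card hTsub
    constructor
    · intro hT S hS hScard
      by_contra hno
      push_neg at hno
      have hSsub : S ⊆ c.lits \ T := fun p hp =>
        Finset.mem_sdiff.mpr ⟨hS hp,
          fun hmem => hno p hp (Finset.mem_filter.mp hmem).2⟩
      have h1 : S.card ≤ c.lits.card - T.card := by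
        calc S.card ≤ (c.lits \ T).card := Finset.card_le_card hSsub
          _ = c.lits.card - T.card := Finset.card_sdiff_of_subset hTsub
      omega
    · intro hprop
      by_contra h
      push_neg at h
      have hTα : T.card ≤ α := Nat.lt_succ_iff.mp h
      have hle : c.lits.card - α ≤ (c.lits \ T).card := by
        rw [Finset.card_sdiff_of_subset hTsub]
        omega
      obtain ⟨S, hS, hScard⟩ := Finset.exists_subset_card_eq hle
      obtain ⟨p, hp, hpsat⟩ := hprop S (hS.trans (Finset.sdiff_subset)) hScard
      have := Finset.mem_sdiff.mp (hS hp)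
      exact this.2 (Finset.mem_filter.mpr ⟨this.1, hpsat⟩)
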